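/- For all integers λ1, λ2, β1, β2 with λ1 ≥ 0, λ2 ≥ 0, −λ1 − λ2 + β2 ≥ 0, λ1 + 2λ2 − β2 ≥ 0, −λ1 − 2λ2 + β1 ≥ 0 and −2λ2 − β1 + 2β2 ≥ 0, one has N(λ1, λ2, β1, β2) = 1 + 3λ2 + (3/2)λ1 − (3/2)β2 + (1/2)λ1² + (1/2)β2² − λ1β2 + 2λ1λ2 − 2λ2β2 + 2λ2². -/

import Mathlib

/-- The number of quadruples `(a22, a11, a12, a13)` of nonnegative integers satisfying
Littelmann's inequalities for `so₅(ℂ)` together with the weight equations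
`a22 + a12 = β1` and `a11 + a13 = β2`.  By Littelmann's results this is the dimension of
the weight space of weight `λ1·ω1 + λ2·ω2 − β1·α1 − β2·α2` in the irreducible
`so₅(ℂ)`-module of highest weight `λ1·ω1 + λ2·ω2`. -/
noncomputable def weightMult (l1 l2 b1 b2 : ℤ) : ℕ :=
  Set.ncard {a : ℤ × ℤ × ℤ × ℤ |
    0 ≤ a.1 ∧ 0 ≤ a.2.1 ∧ 0 ≤ a.2.2.1 ∧ 0 ≤ a.2.2.2 ∧
    2 * a.2.1 ≥ a.2.2.1 ∧
    a.2.2.1 ≥ 2 * a.2.2.2 ∧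
    a.2.2.2 ≤ l2 ∧
    a.2.2.1 ≤ l1 + 2 * a.2.2.2 ∧
    a.2.1 ≤ l2 + a.2.2.1 - 2 * a.2.2.2 ∧
    a.1 ≤ l1 + 2 * a.2.1 - 2 * a.2.2.1 + 2 * a.2.2.2 ∧
    a.1 + a.2.2.1 = b1 ∧
    a.2.1 + a.2.2.2 = b2}

/-- The triangle `{(u,v) : u + v ≤ n}` as a finset. -/
private def triFinset (n : ℕ) : Finset (ℕ × ℕ) :=
  (Finset.range (n+1)).biUnion (fun s => Finset.HasAntidiagonal.antidiagonal s)

private lemma mem_triFinset {n : ℕ} {p : ℕ × ℕ} : p ∈ triFinset n ↔ p.1 + p.2 ≤ n := by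
  simp only [triFinset, Finset.mem_biUnion, Finset.mem_range, Finset.HasAntidiagonal.mem_antidiagonal]
  constructor
  · rintro ⟨s, hs, h⟩; omega
  · intro h; exact ⟨p.1 + p.2, by omega, rfl⟩

private lemma sum_succ_range (n : ℕ) : (∑ s ∈ Finset.range (n+1), (s+1)) * 2 = (n+1) * (n+2) := by
  induction n with
  | zero => simp
  | succ k ih =>
      rw [Finset.sum_range_succ, add_mul, ih]
      ring

private lemma triFinset_card (n : ℕ) : (triFinset n).card * 2 = (n+1) * (n+2) := by
  have hdisj : ∀ s ∈ Finset.range (n+1), ∀ t ∈ Finset.range (n+1), s ≠ t →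
      Disjoint (Finset.HasAntidiagonal.antidiagonal s) (Finset.HasAntidiagonal.antidiagonal t) := by
    intro s _ t _ hst
    rw [Finset.disjoint_left]
    intro p hp hq
    rw [Finset.HasAntidiagonal.mem_antidiagonal] at hp hq
    omega
  rw [triFinset, Finset.card_biUnion hdisj]
  simp only [Finset.Nat.card_antidiagonal]
  exact sum_succ_range n

theorem weightMult_on_cone_f33 (l1 l2 b1 b2 : ℤ)
    (h0 : 0 ≤ l1)
    (h1 : 0 ≤ l2)
    (h2 : 0 ≤ -l1 - l2 + b2)
    (h3 : 0 ≤ l1 + 2*l2 - b2)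
    (h4 : 0 ≤ -l1 - 2*l2 + b1)
    (h5 : 0 ≤ -2*l2 - b1 + 2*b2) :
    (weightMult l1 l2 b1 b2 : ℚ) = 1 + 3*l2 + (3/2)*l1 - (3/2)*b2 + (1/2)*l1^2 + (1/2)*b2^2 - l1*b2 + 2*l1*l2 - 2*l2*b2 + 2*l2^2 := by
  set e : ℤ := l1 + 2*l2 - b2 with hedef
  have he : (0:ℤ) ≤ e := h3
  set n : ℕ := e.toNat with hn
  have hne : (n:ℤ) = e := Int.toNat_of_nonneg he
  -- the parametrization of the solution set by the triangle
  set F : ℕ × ℕ → ℤ × ℤ × ℤ × ℤ := fun p =>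
    (b1 - (2*(p.1:ℤ) + (p.2:ℤ) + 2*b2 - l1 - 2*l2),
     b2 - ((p.1:ℤ) + (p.2:ℤ) + b2 - l1 - l2),
     2*(p.1:ℤ) + (p.2:ℤ) + 2*b2 - l1 - 2*l2,
     (p.1:ℤ) + (p.2:ℤ) + b2 - l1 - l2) with hF
  have hset : {a : ℤ × ℤ × ℤ × ℤ |
      0 ≤ a.1 ∧ 0 ≤ a.2.1 ∧ 0 ≤ a.2.2.1 ∧ 0 ≤ a.2.2.2 ∧
      2 * a.2.1 ≥ a.2.2.1 ∧
      a.2.2.1 ≥ 2 * a.2.2.2 ∧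
      a.2.2.2 ≤ l2 ∧
      a.2.2.1 ≤ l1 + 2 * a.2.2.2 ∧
      a.2.1 ≤ l2 + a.2.2.1 - 2 * a.2.2.2 ∧
      a.1 ≤ l1 + 2 * a.2.1 - 2 * a.2.2.1 + 2 * a.2.2.2 ∧
      a.1 + a.2.2.1 = b1 ∧
      a.2.1 + a.2.2.2 = b2} = ↑((triFinset n).image F) := by
    ext a
    simp only [Set.mem_setOf_eq, Finset.coe_image, Set.mem_image, Finset.mem_coe,
      mem_triFinset]
    constructor
    · rintro ⟨c1, c2, c3, c4, c5, c6, c7, c8, c9, c10, c11, c12⟩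
      refine ⟨((a.2.2.1 - b2 + l2 - a.2.2.2).toNat, (l1 + 2*a.2.2.2 - a.2.2.1).toNat),
        ?_, ?_⟩
      · have hu : ((a.2.2.1 - b2 + l2 - a.2.2.2).toNat : ℤ) =
            a.2.2.1 - b2 + l2 - a.2.2.2 := Int.toNat_of_nonneg (by omega)
        have hv : ((l1 + 2*a.2.2.2 - a.2.2.1).toNat : ℤ) =
            l1 + 2*a.2.2.2 - a.2.2.1 := Int.toNat_of_nonneg (by omega)
        omega
      · have hu : ((a.2.2.1 - b2 + l2 - a.2.2.2).toNat : ℤ) =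
            a.2.2.1 - b2 + l2 - a.2.2.2 := Int.toNat_of_nonneg (by omega)
        have hv : ((l1 + 2*a.2.2.2 - a.2.2.1).toNat : ℤ) =
            l1 + 2*a.2.2.2 - a.2.2.1 := Int.toNat_of_nonneg (by omega)
        obtain ⟨x1, x2, x3, x4⟩ := a
        simp only [hF]
        simp only at hu hv c1 c2 c3 c4 c5 c6 c7 c8 c9 c10 c11 c12 ⊢
        rw [hu, hv]
        refine Prod.ext ?_ (Prod.ext ?_ (Prod.ext ?_ ?_)) <;> simp <;> omega
    · rintro ⟨⟨u, v⟩, hp, rfl⟩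
      simp only [hF]
      have huv : (u:ℤ) + (v:ℤ) ≤ e := by exact_mod_cast hne ▸ Nat.cast_le.mpr hp
      have hu0 : (0:ℤ) ≤ (u:ℤ) := Int.natCast_nonneg u
      have hv0 : (0:ℤ) ≤ (v:ℤ) := Int.natCast_nonneg v
      refine ⟨by omega, by omega, by omega, by omega, by omega, by omega, by omega,
        by omega, by omega, by omega, by omega, by omega⟩
  have hinj : Set.InjOn F ↑(triFinset n) := by
    intro p _ q _ hpq
    simp only [hF, Prod.mk.injEq] at hpq
    obtain ⟨-, -, h3', h4'⟩ := hpq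
    have : (p.1:ℤ) = q.1 ∧ (p.2:ℤ) = q.2 := by omega
    exact Prod.ext (by exact_mod_cast this.1) (by exact_mod_cast this.2)
  have hcard : weightMult l1 l2 b1 b2 = (triFinset n).card := by
    rw [weightMult, hset, Set.ncard_coe_finset,
      Finset.card_image_of_injOn (by simpa using hinj)]
  have h2n : (weightMult l1 l2 b1 b2) * 2 = (n+1) * (n+2) := by
    rw [hcard]; exact triFinset_card n
  have hq : (weightMult l1 l2 b1 b2 : ℚ) * 2 = ((n:ℚ)+1) * ((n:ℚ)+2) := by
    exact_mod_cast h2n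
  have hnq : (n:ℚ) = (l1:ℚ) + 2*l2 - b2 := by
    have := hne
    push_cast [hedef] at this ⊢
    exact_mod_cast congrArg (fun x : ℤ => (x:ℚ)) hne
  rw [hnq] at hq
  linear_combination hq / 2
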